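/- For n ≥ 2, the map Φ_n : ℝ_{>0} × ℝ × P_{A_{n−1}} → P_{A_n} defined by Φ_n(a,b,z) = y, where y_{11} = a, y_{12} = y_{21} = ab, y_{22} = ab² + z_{22}, and y_{ij} = z_{ij} for all other pairs (i,j), is well defined (its values indeed lie in P_{A_n}) and is a bijection. -/

import Mathlib

open Matrix

noncomputable section

/-- Tridiagonal symmetric real `n × n` matrices (the space `Z_G` for `G = A_n`). -/
def ZG (n : ℕ) : Set (Matrix (Fin n) (Fin n) ℝ) :=
  {y | y.IsSymm ∧ ∀ i j : Fin n, ((i : ℕ) + 1 < (j : ℕ) ∨ (j : ℕ) + 1 < (i : ℕ)) → y i j = 0}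

/-- The cone `P_G` of positive definite matrices in `Z_G`. -/
def PG (n : ℕ) : Set (Matrix (Fin n) (Fin n) ℝ) :=
  {y | y ∈ ZG n ∧ y.PosDef}

/-- The map `Φ : (a, b, z) ↦ y` of the recurrent construction of `P_{A_{n+2}}` from
`P_{A_{n+1}}` : `y₁₁ = a`, `y₁₂ = y₂₁ = ab`, `y₂₂ = ab² + z₂₂`, and `y_{ij} = z_{ij}`
otherwise (vertex `v` of the inner graph `{2, …, n+2}` is the index `v - 2` of `z`). -/
def Phi {n : ℕ} (a b : ℝ) (z : Matrix (Fin (n + 1)) (Fin (n + 1)) ℝ) :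
    Matrix (Fin (n + 2)) (Fin (n + 2)) ℝ :=
  Matrix.of fun i j =>
    if (i : ℕ) = 0 ∧ (j : ℕ) = 0 then a
    else if ((i : ℕ) = 0 ∧ (j : ℕ) = 1) ∨ ((i : ℕ) = 1 ∧ (j : ℕ) = 0) then a * b
    else if (i : ℕ) = 0 ∨ (j : ℕ) = 0 then 0
    else (if (i : ℕ) = 1 ∧ (j : ℕ) = 1 then a * b ^ 2 else 0) +
      z ⟨(i : ℕ) - 1, by have := i.isLt; omega⟩ ⟨(j : ℕ) - 1, by have := j.isLt; omega⟩

variable {n : ℕ} (a b : ℝ) (z : Matrix (Fin (n + 1)) (Fin (n + 1)) ℝ)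

lemma phi00 : Phi a b z 0 0 = a := by simp [Phi]

lemma phi0succ (j : Fin (n + 1)) :
    Phi a b z 0 j.succ = if j = 0 then a * b else 0 := by
  rcases Fin.eq_zero_or_eq_succ j with h | ⟨j', rfl⟩
  · subst h; simp [Phi]
  · simp [Phi, Fin.succ_ne_zero]

lemma phisucc0 (i : Fin (n + 1)) :
    Phi a b z i.succ 0 = if i = 0 then a * b else 0 := by
  rcases Fin.eq_zero_or_eq_succ i with h | ⟨i', rfl⟩
  · subst h; simp [Phi]
  · simp [Phi, Fin.succ_ne_zero]

lemma phisuccsucc (i j : Fin (n + 1)) :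
    Phi a b z i.succ j.succ = (if i = 0 ∧ j = 0 then a * b ^ 2 else 0) + z i j := by
  have hi : (i.succ : ℕ) = (i : ℕ) + 1 := rfl
  have hj : (j.succ : ℕ) = (j : ℕ) + 1 := rfl
  simp only [Phi, Matrix.of_apply, hi, hj]
  have h1 : ¬((i : ℕ) + 1 = 0 ∧ (j : ℕ) + 1 = 0) := by omega
  have h2 : ¬(((i : ℕ) + 1 = 0 ∧ (j : ℕ) + 1 = 1) ∨ ((i : ℕ) + 1 = 1 ∧ (j : ℕ) + 1 = 0)) := by omega
  have h3 : ¬((i : ℕ) + 1 = 0 ∨ (j : ℕ) + 1 = 0) := by omega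
  rw [if_neg h1, if_neg h2, if_neg h3]
  have he : (z ⟨(i : ℕ) + 1 - 1, by omega⟩ ⟨(j : ℕ) + 1 - 1, by omega⟩ : ℝ) = z i j := by
    congr 1 <;> exact Fin.ext (by simp)
  rw [he]
  congr 1
  by_cases h : i = 0 ∧ j = 0
  · obtain ⟨rfl, rfl⟩ := h; simp
  · rw [if_neg h, if_neg (by simp only [Fin.ext_iff, Fin.val_zero] at h; omega)]

lemma phi01 : Phi a b z 0 1 = a * b := by
  rw [show (1 : Fin (n + 2)) = Fin.succ 0 from rfl, phi0succ]; simp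

lemma phi10 : Phi a b z 1 0 = a * b := by
  rw [show (1 : Fin (n + 2)) = Fin.succ 0 from rfl, phisucc0]; simp

lemma phi0ss (j : Fin n) : Phi a b z 0 j.succ.succ = 0 := by
  rw [phi0succ, if_neg (Fin.succ_ne_zero j)]

lemma phiss0 (i : Fin n) : Phi a b z i.succ.succ 0 = 0 := by
  rw [phisucc0, if_neg (Fin.succ_ne_zero i)]

lemma phisucc1 (i : Fin (n + 1)) :
    Phi a b z i.succ 1 = (if i = 0 then a * b ^ 2 else 0) + z i 0 := by
  rw [show (1 : Fin (n + 2)) = Fin.succ 0 from rfl, phisuccsucc]; simp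

lemma phi1succ (j : Fin (n + 1)) :
    Phi a b z 1 j.succ = (if j = 0 then a * b ^ 2 else 0) + z 0 j := by
  rw [show (1 : Fin (n + 2)) = Fin.succ 0 from rfl, phisuccsucc]; simp

lemma phisucc_ss (i : Fin (n + 1)) (j : Fin n) :
    Phi a b z i.succ j.succ.succ = z i j.succ := by
  rw [phisuccsucc, if_neg (by simp [Fin.succ_ne_zero]), zero_add]

lemma phi11 : Phi a b z 1 1 = a * b ^ 2 + z 0 0 := by
  simpa using phisuccsucc a b z 0 0

lemma phi1ss (j : Fin n) : Phi a b z 1 j.succ.succ = z 0 j.succ := by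
  simpa using phisucc_ss a b z 0 j

lemma phi_mulVec_zero (x : Fin (n + 2) → ℝ) :
    (Phi a b z *ᵥ x) 0 = a * x 0 + a * b * x 1 := by
  simp [mulVec, dotProduct, Fin.sum_univ_succ, phi00, phi01, phi0ss]

lemma phi_mulVec_succ (x : Fin (n + 2) → ℝ) (i : Fin (n + 1)) :
    (Phi a b z *ᵥ x) i.succ =
      (if i = 0 then a * b * x 0 + a * b ^ 2 * x 1 else 0)
        + (z *ᵥ (x ∘ Fin.succ)) i := by
  rcases eq_or_ne i 0 with rfl | hi
  · simp [mulVec, dotProduct, Fin.sum_univ_succ, phi10, phi11, phi1ss,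
      Function.comp]
    ring
  · simp [mulVec, dotProduct, Fin.sum_univ_succ, phisucc0, phisucc1, phisucc_ss,
      Function.comp, hi]

lemma quad (x : Fin (n + 2) → ℝ) :
    x ⬝ᵥ (Phi a b z *ᵥ x) =
      a * (x 0 + b * x 1) ^ 2 + (x ∘ Fin.succ) ⬝ᵥ (z *ᵥ (x ∘ Fin.succ)) := by
  rw [dotProduct, Fin.sum_univ_succ, phi_mulVec_zero]
  simp only [phi_mulVec_succ, mul_add, mul_ite, mul_zero, Finset.sum_add_distrib,
    Finset.sum_ite_eq', Finset.mem_univ, if_true]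
  rw [dotProduct]
  simp only [Function.comp, Fin.succ_zero_eq_one]
  ring

lemma symm_to_herm {m : Type*} [Fintype m] {A : Matrix m m ℝ} (h : A.IsSymm) :
    A.IsHermitian := by
  ext i j
  simpa using congrFun (congrFun h i) j

lemma phi_mem (ha : 0 < a) (hz : z ∈ PG (n + 1)) : Phi a b z ∈ PG (n + 2) := by
  obtain ⟨⟨hzs, hzt⟩, hzpd⟩ := hz
  have hsym : (Phi a b z).IsSymm := by
    refine Matrix.IsSymm.ext fun i j => ?_
    obtain rfl | ⟨i', rfl⟩ := Fin.eq_zero_or_eq_succ i <;>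
      obtain rfl | ⟨j', rfl⟩ := Fin.eq_zero_or_eq_succ j
    · rfl
    · rw [phi0succ, phisucc0]
    · rw [phi0succ, phisucc0]
    · rw [phisuccsucc, phisuccsucc]
      simp only [and_comm, hzs.apply i' j']
  refine ⟨⟨hsym, ?_⟩, Matrix.PosDef.of_dotProduct_mulVec_pos (symm_to_herm hsym) ?_⟩
  · intro i j hij
    obtain rfl | ⟨i', rfl⟩ := Fin.eq_zero_or_eq_succ i <;>
      obtain rfl | ⟨j', rfl⟩ := Fin.eq_zero_or_eq_succ j
    · simp at hij
    · rw [phi0succ, if_neg]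
      intro h; subst h; simp at hij
    · rw [phisucc0, if_neg]
      intro h; subst h; simp at hij
    · rw [phisuccsucc]
      simp only [Fin.val_succ] at hij
      rw [hzt i' j' (by omega), if_neg, add_zero]
      rintro ⟨rfl, rfl⟩
      simp at hij
  · intro x hx
    rw [show star x = x from star_trivial x, quad]
    by_cases hxs : x ∘ Fin.succ = 0
    · have hx1 : x 1 = 0 := by
        have := congrFun hxs 0
        simpa using this
      have hx0 : x 0 ≠ 0 := by
        intro h0
        apply hx
        funext i
        obtain rfl | ⟨i', rfl⟩ := Fin.eq_zero_or_eq_succ i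
        · exact h0
        · exact congrFun hxs i'
      rw [hxs, hx1]
      simp only [Matrix.mulVec_zero, dotProduct_zero, add_zero, mul_zero]
      positivity
    · have h1 : 0 < (x ∘ Fin.succ) ⬝ᵥ (z *ᵥ (x ∘ Fin.succ)) := by
        have := hzpd.dotProduct_mulVec_pos hxs
        rwa [show star (x ∘ Fin.succ) = x ∘ Fin.succ from star_trivial _] at this
      have h2 : 0 ≤ a * (x 0 + b * x 1) ^ 2 := by positivity
      linarith


/-- `Φ` is a well-defined bijection from `ℝ₊ × ℝ × P_{A_{n+1}}` onto `P_{A_{n+2}}`. -/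
theorem stmt3 (n : ℕ) :
    Set.BijOn (fun p : ℝ × ℝ × Matrix (Fin (n + 1)) (Fin (n + 1)) ℝ => Phi p.1 p.2.1 p.2.2)
      {p | 0 < p.1 ∧ p.2.2 ∈ PG (n + 1)} (PG (n + 2)) := by
  refine ⟨?_, ?_, ?_⟩
  · rintro ⟨a, b, z⟩ ⟨ha, hz⟩
    exact phi_mem a b z ha hz
  · rintro ⟨a, b, z⟩ ⟨ha, hz⟩ ⟨a', b', z'⟩ ⟨ha', hz'⟩ h
    simp only at h ha ha'
    have hA : a = a' := by
      have := congrFun (congrFun h 0) 0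
      rwa [phi00, phi00] at this
    have hB : b = b' := by
      have := congrFun (congrFun h 0) 1
      rw [phi01, phi01, hA] at this
      exact mul_left_cancel₀ (ne_of_gt (hA ▸ ha)) this
    have hZ : z = z' := by
      ext i j
      have := congrFun (congrFun h i.succ) j.succ
      rw [phisuccsucc, phisuccsucc, hA, hB] at this
      exact add_left_cancel this
    simp [Prod.ext_iff, hA, hB, hZ]
  · rintro y ⟨⟨hys, hyt⟩, hypd⟩
    have ha : 0 < y 0 0 := by
      have hne : (Pi.single 0 1 : Fin (n + 2) → ℝ) ≠ 0 := by
        intro hc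
        have := congrFun hc 0
        simp at this
      have := hypd.dotProduct_mulVec_pos hne
      rw [star_trivial, Matrix.mulVec_single, single_dotProduct] at this
      simpa using this
    set a : ℝ := y 0 0 with hadef
    set b : ℝ := y 0 1 / a with hbdef
    have hane : a ≠ 0 := ne_of_gt ha
    have hab : a * b = y 0 1 := by
      rw [hbdef]; field_simp
    set zm : Matrix (Fin (n + 1)) (Fin (n + 1)) ℝ :=
      Matrix.of fun i j => if i = 0 ∧ j = 0 then y 1 1 - a * b ^ 2 else y i.succ j.succ
      with hzm
    have hzm_apply : ∀ i j, zm i j =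
        if i = 0 ∧ j = 0 then y 1 1 - a * b ^ 2 else y i.succ j.succ := fun i j => rfl
    have hPhi : Phi a b zm = y := by
      ext i j
      obtain rfl | ⟨i', rfl⟩ := Fin.eq_zero_or_eq_succ i <;>
        obtain rfl | ⟨j', rfl⟩ := Fin.eq_zero_or_eq_succ j
      · rw [phi00]
      · rw [phi0succ]
        rcases eq_or_ne j' 0 with rfl | hj
        · simpa using hab
        · rw [if_neg hj]
          have hjv : (j' : ℕ) ≠ 0 := fun hc => hj (Fin.ext hc)
          exact (hyt _ _ (Or.inl (by simp [Fin.val_succ]; exact Fin.pos_iff_ne_zero.mpr hj))).symm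
      · rw [phisucc0]
        rcases eq_or_ne i' 0 with rfl | hi
        · rw [if_pos rfl, ← hys.apply]
          simpa using hab
        · rw [if_neg hi]
          have hiv : (i' : ℕ) ≠ 0 := fun hc => hi (Fin.ext hc)
          exact (hyt _ _ (Or.inr (by simp [Fin.val_succ]; exact Fin.pos_iff_ne_zero.mpr hi))).symm
      · rw [phisuccsucc, hzm_apply]
        by_cases hc : i' = 0 ∧ j' = 0
        · obtain ⟨rfl, rfl⟩ := hc
          rw [if_pos (⟨rfl, rfl⟩ : (0 : Fin (n+1)) = 0 ∧ (0 : Fin (n+1)) = 0),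
            if_pos (⟨rfl, rfl⟩ : (0 : Fin (n+1)) = 0 ∧ (0 : Fin (n+1)) = 0),
            show Fin.succ (0 : Fin (n + 1)) = 1 from rfl]
          ring
        · rw [if_neg hc, if_neg hc, zero_add]
    have hzs : zm.IsSymm := by
      refine Matrix.IsSymm.ext fun i j => ?_
      rw [hzm_apply, hzm_apply]
      by_cases hc : i = 0 ∧ j = 0
      · obtain ⟨rfl, rfl⟩ := hc; rfl
      · rw [if_neg hc, if_neg (fun hc2 => hc ⟨hc2.2, hc2.1⟩), hys.apply]
    have hzt : ∀ i j : Fin (n + 1), ((i : ℕ) + 1 < (j : ℕ) ∨ (j : ℕ) + 1 < (i : ℕ)) →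
        zm i j = 0 := by
      intro i j hij
      rw [hzm_apply, if_neg (by rintro ⟨rfl, rfl⟩; simp at hij)]
      exact hyt _ _ (by simp only [Fin.val_succ]; omega)
    have hzpd : zm.PosDef := by
      refine Matrix.PosDef.of_dotProduct_mulVec_pos (symm_to_herm hzs) fun x hx => ?_
      set w : Fin (n + 2) → ℝ := Fin.cases (-(b * x 0)) x with hw
      have hwsucc : w ∘ Fin.succ = x := funext fun i => by simp [hw]
      have hw0 : w 0 = -(b * x 0) := by simp [hw]
      have hw1 : w 1 = x 0 := Fin.cases_succ 0
      have hq := quad a b zm w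
      rw [hwsucc, hw0, hw1, hPhi] at hq
      have hwne : w ≠ 0 := by
        intro hc
        apply hx
        rw [← hwsucc, hc]
        rfl
      have hpos := hypd.dotProduct_mulVec_pos hwne
      rw [star_trivial, hq] at hpos
      rw [star_trivial]
      have hz0 : (-(b * x 0) + b * x 0) = 0 := by ring
      rw [hz0] at hpos
      simpa using hpos
    exact ⟨(a, b, zm), ⟨ha, ⟨hzs, hzt⟩, hzpd⟩, hPhi⟩
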